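/- Let μ, σ ∈ ℝ^d with σ_j > 0 for all j, let Z ∼ γ_d, and set X = μ + σ ⊙ Z. Let f : ℝ^d → ℝ be twice continuously differentiable with |f|, ‖∇f‖, ‖∇²f‖ bounded by a polynomial in ‖x‖, and suppose h_j := E[(∂²_{jj} f)(X)] < 0 for every j. Let β = (β⁰, β¹, β²) ∈ ℝ^{2d+1} be the unique minimiser of β' ↦ E[(β'⁰ + β'¹ ⬝ X + Σ_j β'²_j X_j² − f(X))²]. Then β²_j = ½ h_j and β¹_j = g_j − μ_j h_j, where g = E[∇f(X)]; consequently, the mean-field Gaussian with natural parameters (β¹, β²) (i.e. density proportional to exp(β¹⬝x + β²⬝x²)) has mean μ'_j = μ_j − g_j / h_j and variance σ'²_j = −1/h_j for every j. -/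

import Mathlib

open MeasureTheory Matrix ProbabilityTheory Real Filter Set Topology

noncomputable section

/-- The standard Gaussian measure on `ℝ^d` (product of `d` copies of `N(0,1)`). -/
def stdGaussian (d : ℕ) : Measure (Fin d → ℝ) :=
  Measure.pi fun _ => ProbabilityTheory.gaussianReal 0 1




lemma poly_exp_bound (k : ℕ) (x : ℝ) :
    (1 + |x|) ^ k * Real.exp (-x ^ 2 / 2) ≤ Real.exp (k + k ^ 2) * Real.exp (-(1/4) * x ^ 2) := by
  have h1 : (1 : ℝ) + |x| ≤ Real.exp (1 + |x|) := by
    have := Real.add_one_le_exp (1 + |x|); linarith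
  have h2 : ((1 : ℝ) + |x|) ^ k ≤ Real.exp (k * (1 + |x|)) := by
    calc ((1:ℝ)+|x|)^k ≤ (Real.exp (1+|x|))^k :=
          pow_le_pow_left₀ (by positivity) h1 k
      _ = Real.exp (k * (1+|x|)) := by rw [← Real.exp_nat_mul]
  calc (1+|x|)^k * Real.exp (-x^2/2) ≤ Real.exp (k*(1+|x|)) * Real.exp (-x^2/2) :=
        mul_le_mul_of_nonneg_right h2 (Real.exp_nonneg _)
    _ = Real.exp (k*(1+|x|) + -x^2/2) := by rw [← Real.exp_add]
    _ ≤ Real.exp ((k + k^2) + -(1/4)*x^2) := by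
        apply Real.exp_le_exp.2
        nlinarith [sq_nonneg (|x| - 2*(k:ℝ)), sq_abs x, Nat.cast_nonneg (α := ℝ) k]
    _ = Real.exp (k + k^2) * Real.exp (-(1/4)*x^2) := by rw [Real.exp_add]

lemma integrable_poly_exp (k : ℕ) :
    Integrable (fun x : ℝ => (1 + |x|) ^ k * Real.exp (-x ^ 2 / 2)) := by
  apply Integrable.mono' (((integrable_exp_neg_mul_sq (by norm_num : (0:ℝ) < 1/4)).const_mul
    (Real.exp (k + k^2))))
  · exact ((continuous_const.add continuous_abs).pow k).mul
      ((continuous_pow 2).neg.div_const 2).rexp |>.aestronglyMeasurable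
  · refine ae_of_all _ fun x => ?_
    rw [Real.norm_eq_abs, abs_of_nonneg (by positivity)]
    exact poly_exp_bound k x

lemma gaussianReal_eq_withDensity :
    gaussianReal 0 1 = MeasureTheory.Measure.withDensity volume
      (fun x => ((gaussianPDFReal 0 1 x).toNNReal : ENNReal)) := by
  rw [gaussianReal_of_var_ne_zero _ one_ne_zero]; rfl

lemma integral_gaussianReal_eq (g : ℝ → ℝ) :
    ∫ x, g x ∂(gaussianReal 0 1) = ∫ x, gaussianPDFReal 0 1 x * g x := by
  rw [gaussianReal_eq_withDensity,
    integral_withDensity_eq_integral_smul (measurable_gaussianPDFReal 0 1).real_toNNReal g]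
  congr 1 with x
  simp [NNReal.smul_def, Real.coe_toNNReal _ (gaussianPDFReal_nonneg 0 1 x)]

lemma integrable_gaussianReal_iff (g : ℝ → ℝ) :
    Integrable g (gaussianReal 0 1) ↔
      Integrable (fun x => g x * gaussianPDFReal 0 1 x) volume := by
  rw [gaussianReal_eq_withDensity]
  rw [integrable_withDensity_iff ((measurable_gaussianPDFReal 0 1).real_toNNReal.coe_nnreal_ennreal)
    (ae_of_all _ fun x => ENNReal.coe_lt_top)]
  constructor <;> intro h <;> apply h.congr <;> refine ae_of_all _ fun x => ?_ <;>
    simp [Real.coe_toNNReal _ (gaussianPDFReal_nonneg 0 1 x)]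

lemma gaussianPDFReal_zero_one (x : ℝ) :
    gaussianPDFReal 0 1 x = (Real.sqrt (2*π))⁻¹ * Real.exp (-x^2/2) := by
  simp [gaussianPDFReal]

lemma tendsto_exp_quarter : Tendsto (fun x : ℝ => Real.exp (-(1/4) * x^2)) atTop (𝓝 0) :=
  Real.tendsto_exp_atBot.comp <| by
    apply Tendsto.const_mul_atTop_of_neg (by norm_num : -(1/4 : ℝ) < 0)
    exact tendsto_pow_atTop two_ne_zero

lemma tendsto_exp_quarter_bot : Tendsto (fun x : ℝ => Real.exp (-(1/4) * x^2)) atBot (𝓝 0) := by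
  have h : (fun x : ℝ => Real.exp (-(1/4) * x^2))
      = (fun x : ℝ => Real.exp (-(1/4) * x^2)) ∘ Neg.neg := by
    ext x; simp [neg_pow]
  rw [h]
  exact tendsto_exp_quarter.comp tendsto_neg_atBot_atTop

lemma stein1 {ψ ψ' : ℝ → ℝ} (hc : Continuous ψ) (hc' : Continuous ψ')
    (hd : ∀ x, HasDerivAt ψ (ψ' x) x) (C : ℝ) (m : ℕ)
    (hψ : ∀ x, |ψ x| ≤ C * (1+|x|)^m) (hψ' : ∀ x, |ψ' x| ≤ C * (1+|x|)^m) :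
    ∫ x, ψ x * x ∂(gaussianReal 0 1) = ∫ x, ψ' x ∂(gaussianReal 0 1) := by
  have hC : 0 ≤ C := by
    have h0 := (abs_nonneg (ψ 0)).trans (hψ 0)
    nlinarith [pow_pos (by norm_num : (0:ℝ) < 1 + |(0:ℝ)|) m]
  -- derivative of the Gaussian kernel
  have hexp : ∀ x : ℝ, HasDerivAt (fun y : ℝ => Real.exp (-y^2/2))
      (-x * Real.exp (-x^2/2)) x := by
    intro x
    have h1 : HasDerivAt (fun y : ℝ => -y^2/2) (-x) x := by
      have := ((hasDerivAt_pow 2 x).neg).div_const 2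
      simpa using this.congr_deriv (by ring)
    simpa [mul_comm, Function.comp_def] using (Real.hasDerivAt_exp (-x^2/2)).comp x h1
  set G : ℝ → ℝ := fun x => ψ x * Real.exp (-x^2/2) with hG
  set G' : ℝ → ℝ := fun x => (ψ' x - x * ψ x) * Real.exp (-x^2/2) with hG'
  have hGd : ∀ x, HasDerivAt G (G' x) x := by
    intro x
    have := (hd x).mul (hexp x)
    apply this.congr_deriv
    simp only [hG']; ring
  have hbound : ∀ x, ‖G' x‖ ≤ C * ((1+|x|)^(m+1) * Real.exp (-x^2/2)) := by
    intro x
    have h1 : |ψ' x - x * ψ x| ≤ C * (1+|x|)^(m+1) := by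
      calc |ψ' x - x * ψ x| ≤ |ψ' x| + |x * ψ x| := abs_sub _ _
        _ = |ψ' x| + |x| * |ψ x| := by rw [abs_mul]
        _ ≤ C * (1+|x|)^m + |x| * (C * (1+|x|)^m) := by
            refine add_le_add (hψ' x) (mul_le_mul_of_nonneg_left (hψ x) (abs_nonneg x))
        _ = C * ((1+|x|)^m * (1 + |x|)) := by ring
        _ = C * (1+|x|)^(m+1) := by rw [pow_succ]
    calc ‖G' x‖ = |ψ' x - x * ψ x| * Real.exp (-x^2/2) := by
          rw [Real.norm_eq_abs, abs_mul, abs_of_nonneg (Real.exp_nonneg _)]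
      _ ≤ (C * (1+|x|)^(m+1)) * Real.exp (-x^2/2) :=
          mul_le_mul_of_nonneg_right h1 (Real.exp_nonneg _)
      _ = C * ((1+|x|)^(m+1) * Real.exp (-x^2/2)) := by ring
  have hG'cont : Continuous G' :=
    ((hc'.sub (continuous_id.mul hc)).mul (((continuous_pow 2).neg.div_const 2).rexp))
  have hG'int : Integrable G' := by
    apply Integrable.mono' ((integrable_poly_exp (m+1)).const_mul C)
      hG'cont.aestronglyMeasurable
    exact ae_of_all _ hbound
  have hGbound : ∀ x : ℝ, ‖G x‖ ≤ C * Real.exp (m + m^2) * Real.exp (-(1/4) * x^2) := by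
    intro x
    calc ‖G x‖ = |ψ x| * Real.exp (-x^2/2) := by
          rw [Real.norm_eq_abs, abs_mul, abs_of_nonneg (Real.exp_nonneg _)]
      _ ≤ (C * (1+|x|)^m) * Real.exp (-x^2/2) :=
          mul_le_mul_of_nonneg_right (hψ x) (Real.exp_nonneg _)
      _ = C * ((1+|x|)^m * Real.exp (-x^2/2)) := by ring
      _ ≤ C * (Real.exp (m + m^2) * Real.exp (-(1/4)*x^2)) :=
          mul_le_mul_of_nonneg_left (poly_exp_bound m x) hC
      _ = C * Real.exp (m + m^2) * Real.exp (-(1/4)*x^2) := by ring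
  have hGtop : Tendsto G atTop (𝓝 0) := by
    apply squeeze_zero_norm hGbound
    simpa using tendsto_exp_quarter.const_mul (C * Real.exp (m + m^2))
  have hGbot : Tendsto G atBot (𝓝 0) := by
    apply squeeze_zero_norm hGbound
    simpa using tendsto_exp_quarter_bot.const_mul (C * Real.exp (m + m^2))
  have hIoi : ∫ x in Ioi (0:ℝ), G' x = 0 - G 0 :=
    integral_Ioi_of_hasDerivAt_of_tendsto' (fun x _ => hGd x) hG'int.integrableOn hGtop
  have hIic : ∫ x in Iic (0:ℝ), G' x = G 0 - 0 :=
    integral_Iic_of_hasDerivAt_of_tendsto' (fun x _ => hGd x) hG'int.integrableOn hGbot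
  have hzero : ∫ x, G' x = 0 := by
    rw [← intervalIntegral.integral_Iic_add_Ioi hG'int.integrableOn hG'int.integrableOn, hIoi, hIic]
    ring
  -- transfer to Gaussian integrals
  have key : ∫ x, (ψ' x - x * ψ x) * Real.exp (-x^2/2) = 0 := hzero
  have hint1 : Integrable (fun x => ψ' x * Real.exp (-x^2/2)) := by
    apply Integrable.mono' ((integrable_poly_exp m).const_mul C)
      (hc'.mul (((continuous_pow 2).neg.div_const 2).rexp)).aestronglyMeasurable
    refine ae_of_all _ fun x => ?_
    show ‖ψ' x * Real.exp (-x^2/2)‖ ≤ _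
    rw [Real.norm_eq_abs, abs_mul, abs_of_nonneg (Real.exp_nonneg _)]
    calc |ψ' x| * Real.exp (-x^2/2) ≤ (C * (1+|x|)^m) * Real.exp (-x^2/2) :=
          mul_le_mul_of_nonneg_right (hψ' x) (Real.exp_nonneg _)
      _ = C * ((1+|x|)^m * Real.exp (-x^2/2)) := by ring
  have hint2 : Integrable (fun x => (x * ψ x) * Real.exp (-x^2/2)) := by
    apply Integrable.mono' ((integrable_poly_exp (m+1)).const_mul C)
      ((continuous_id.mul hc).mul (((continuous_pow 2).neg.div_const 2).rexp)).aestronglyMeasurable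
    refine ae_of_all _ fun x => ?_
    show ‖(x * ψ x) * Real.exp (-x^2/2)‖ ≤ _
    rw [Real.norm_eq_abs, abs_mul, abs_of_nonneg (Real.exp_nonneg _)]
    have : |x * ψ x| ≤ C * (1+|x|)^(m+1) := by
      rw [abs_mul, pow_succ]
      calc |x| * |ψ x| ≤ |x| * (C * (1+|x|)^m) :=
            mul_le_mul_of_nonneg_left (hψ x) (abs_nonneg x)
        _ ≤ (1 + |x|) * (C * (1+|x|)^m) := by
            refine mul_le_mul_of_nonneg_right (by linarith [abs_nonneg x]) (by positivity)
        _ = C * ((1+|x|)^m * (1+|x|)) := by ring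
    calc |x * ψ x| * Real.exp (-x^2/2) ≤ (C * (1+|x|)^(m+1)) * Real.exp (-x^2/2) :=
          mul_le_mul_of_nonneg_right this (Real.exp_nonneg _)
      _ = C * ((1+|x|)^(m+1) * Real.exp (-x^2/2)) := by ring
  have hsub : (∫ x, ψ' x * Real.exp (-x^2/2)) - ∫ x, (x * ψ x) * Real.exp (-x^2/2) = 0 := by
    rw [← integral_sub hint1 hint2]
    rw [← key]
    congr 1 with x; ring
  rw [integral_gaussianReal_eq, integral_gaussianReal_eq]
  simp only [gaussianPDFReal_zero_one]
  have e1 : ∀ g : ℝ → ℝ, (∫ x, (Real.sqrt (2*π))⁻¹ * Real.exp (-x^2/2) * g x)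
      = (Real.sqrt (2*π))⁻¹ * ∫ x, g x * Real.exp (-x^2/2) := by
    intro g
    rw [← integral_const_mul]
    congr 1 with x; ring
  rw [e1, e1]
  have : (∫ x, (ψ x * x) * Real.exp (-x^2/2)) = ∫ x, (x * ψ x) * Real.exp (-x^2/2) := by
    congr 1 with x; ring
  rw [this]
  congr 1
  linarith [hsub]


instance stdGaussian_prob (d : ℕ) : IsProbabilityMeasure (stdGaussian d) := by
  unfold _root_.stdGaussian; infer_instance

lemma integrable_poly_gaussianReal (m : ℕ) :
    Integrable (fun x : ℝ => (1 + |x|) ^ m) (gaussianReal 0 1) := by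
  rw [integrable_gaussianReal_iff]
  apply Integrable.mono' ((integrable_poly_exp m).const_mul (Real.sqrt (2*π))⁻¹)
  · exact ((((continuous_const.add continuous_abs).pow m).stronglyMeasurable).mul
      (stronglyMeasurable_gaussianPDFReal 0 1)).aestronglyMeasurable
  · refine ae_of_all _ fun x => ?_
    rw [Real.norm_eq_abs, gaussianPDFReal_zero_one]
    rw [abs_of_nonneg (by positivity)]
    calc (1+|x|)^m * ((Real.sqrt (2*π))⁻¹ * Real.exp (-x^2/2))
        = (Real.sqrt (2*π))⁻¹ * ((1+|x|)^m * Real.exp (-x^2/2)) := by ring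
      _ ≤ _ := le_refl _

lemma integrable_prod_poly (d m : ℕ) :
    Integrable (fun z : Fin d → ℝ => ∏ j, (1 + |z j|) ^ m) (stdGaussian d) := by
  induction d with
  | zero =>
      simp only [Finset.univ_eq_empty, Finset.prod_empty]
      exact integrable_const 1
  | succ n ih =>
      have hmp := (measurePreserving_piFinSuccAbove
        (fun _ : Fin (n+1) => gaussianReal 0 1) 0).symm
      rw [_root_.stdGaussian, ← hmp.integrable_comp_emb (MeasurableEquiv.measurableEmbedding _)]
      simp_rw [MeasurableEquiv.piFinSuccAbove_symm_apply, Fin.insertNthEquiv,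
        Fin.prod_univ_succ, Fin.insertNth_zero]
      simp only [Fin.zero_succAbove, Function.comp_def, Fin.cons_zero, Fin.cons_succ,
        Equiv.coe_fn_mk]
      exact Integrable.mul_prod (integrable_poly_gaussianReal m) ih


lemma real_one_le_prod {ι : Type*} {s : Finset ι} {f : ι → ℝ} (h : ∀ i ∈ s, 1 ≤ f i) :
    1 ≤ ∏ i ∈ s, f i := by
  classical
  induction s using Finset.cons_induction with
  | empty => simp
  | cons a s' ha ih =>
      rw [Finset.prod_cons]
      have h1 := h a (Finset.mem_cons_self a s')
      have h2 := ih fun i hi => h i (Finset.mem_cons_of_mem hi)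
      nlinarith

lemma real_single_le_prod {ι : Type*} {s : Finset ι} {f : ι → ℝ} (h : ∀ i ∈ s, 1 ≤ f i)
    {i : ι} (hi : i ∈ s) : f i ≤ ∏ j ∈ s, f j := by
  classical
  have := Finset.mul_prod_erase s f hi
  rw [← this]
  have h2 : (1:ℝ) ≤ ∏ j ∈ s.erase i, f j :=
    real_one_le_prod fun k hk => h k (Finset.mem_of_mem_erase hk)
  nlinarith [h i hi]

lemma one_add_norm_le_prod {d : ℕ} (z : Fin d → ℝ) :
    1 + ‖z‖ ≤ ∏ j, (1 + |z j|) := by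
  have hone : ∀ k ∈ Finset.univ, (1:ℝ) ≤ 1 + |z k| := fun k _ => by
    linarith [abs_nonneg (z k)]
  have hprod : (1:ℝ) ≤ ∏ j, (1 + |z j|) := real_one_le_prod hone
  have : ‖z‖ ≤ (∏ j, (1 + |z j|)) - 1 := by
    apply pi_norm_le_iff_of_nonneg (by linarith) |>.2
    intro i
    have h1 : (1:ℝ) + |z i| ≤ ∏ j, (1 + |z j|) :=
      real_single_le_prod hone (Finset.mem_univ i)
    rw [Real.norm_eq_abs]; linarith
  linarith

def PolyBound {d : ℕ} (g : (Fin d → ℝ) → ℝ) : Prop :=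
  ∃ C : ℝ, ∃ m : ℕ, 0 ≤ C ∧ ∀ z, |g z| ≤ C * (1 + ‖z‖) ^ m

lemma PolyBound.mono_exp {d : ℕ} {g : (Fin d → ℝ) → ℝ} {C : ℝ} {m m' : ℕ}
    (hC : 0 ≤ C) (h : ∀ z, |g z| ≤ C * (1 + ‖z‖) ^ m) (hm : m ≤ m') :
    ∀ z, |g z| ≤ C * (1 + ‖z‖) ^ m' := by
  intro z
  refine (h z).trans (mul_le_mul_of_nonneg_left ?_ hC)
  exact pow_le_pow_right₀ (by linarith [norm_nonneg z]) hm

lemma integrable_polyBound {d : ℕ} {g : (Fin d → ℝ) → ℝ}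
    (hg : Continuous g) (h : PolyBound g) : Integrable g (stdGaussian d) := by
  obtain ⟨C, m, hC, hb⟩ := h
  apply Integrable.mono' ((integrable_prod_poly d m).const_mul C) hg.aestronglyMeasurable
  refine ae_of_all _ fun z => ?_
  rw [Real.norm_eq_abs]
  refine (hb z).trans ?_
  refine mul_le_mul_of_nonneg_left ?_ hC
  calc (1+‖z‖)^m ≤ (∏ j, (1 + |z j|))^m :=
        pow_le_pow_left₀ (by positivity) (one_add_norm_le_prod z) m
    _ = ∏ j, (1 + |z j|)^m := by rw [Finset.prod_pow]

lemma pb_const {d : ℕ} (c : ℝ) : PolyBound (fun _ : Fin d → ℝ => c) :=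
  ⟨|c|, 0, abs_nonneg c, fun z => by simp⟩

lemma pb_coord {d : ℕ} (j : Fin d) : PolyBound (fun z : Fin d → ℝ => z j) :=
  ⟨1, 1, zero_le_one, fun z => by
    have := norm_le_pi_norm z j
    rw [Real.norm_eq_abs] at this
    simp only [pow_one, one_mul]
    linarith [norm_nonneg z]⟩

lemma pb_add {d : ℕ} {g h : (Fin d → ℝ) → ℝ} (hg : PolyBound g) (hh : PolyBound h) :
    PolyBound (fun z => g z + h z) := by
  obtain ⟨C₁, m₁, hC₁, h₁⟩ := hg
  obtain ⟨C₂, m₂, hC₂, h₂⟩ := hh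
  refine ⟨C₁ + C₂, max m₁ m₂, by linarith, fun z => ?_⟩
  have b₁ := PolyBound.mono_exp hC₁ h₁ (le_max_left m₁ m₂) z
  have b₂ := PolyBound.mono_exp hC₂ h₂ (le_max_right m₁ m₂) z
  calc |g z + h z| ≤ |g z| + |h z| := abs_add_le _ _
    _ ≤ C₁ * (1+‖z‖)^(max m₁ m₂) + C₂ * (1+‖z‖)^(max m₁ m₂) := add_le_add b₁ b₂
    _ = (C₁ + C₂) * (1+‖z‖)^(max m₁ m₂) := by ring

lemma pb_mul {d : ℕ} {g h : (Fin d → ℝ) → ℝ} (hg : PolyBound g) (hh : PolyBound h) :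
    PolyBound (fun z => g z * h z) := by
  obtain ⟨C₁, m₁, hC₁, h₁⟩ := hg
  obtain ⟨C₂, m₂, hC₂, h₂⟩ := hh
  refine ⟨C₁ * C₂, m₁ + m₂, mul_nonneg hC₁ hC₂, fun z => ?_⟩
  rw [abs_mul, pow_add]
  calc |g z| * |h z| ≤ (C₁ * (1+‖z‖)^m₁) * (C₂ * (1+‖z‖)^m₂) :=
        mul_le_mul (h₁ z) (h₂ z) (abs_nonneg _) (by positivity)
    _ = C₁ * C₂ * ((1+‖z‖)^m₁ * (1+‖z‖)^m₂) := by ring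

lemma pb_neg {d : ℕ} {g : (Fin d → ℝ) → ℝ} (hg : PolyBound g) :
    PolyBound (fun z => -g z) := by
  obtain ⟨C, m, hC, h⟩ := hg
  exact ⟨C, m, hC, fun z => by rw [abs_neg]; exact h z⟩

lemma pb_sub {d : ℕ} {g h : (Fin d → ℝ) → ℝ} (hg : PolyBound g) (hh : PolyBound h) :
    PolyBound (fun z => g z - h z) := by
  simpa [sub_eq_add_neg] using pb_add hg (pb_neg hh)

lemma pb_sum {d : ℕ} {ι : Type*} (s : Finset ι) (g : ι → (Fin d → ℝ) → ℝ)
    (h : ∀ i ∈ s, PolyBound (g i)) : PolyBound (fun z => ∑ i ∈ s, g i z) := by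
  classical
  induction s using Finset.induction with
  | empty => simpa using pb_const 0
  | @insert a s' hnot ih =>
      simp only [Finset.sum_insert hnot]
      exact pb_add (h a (Finset.mem_insert_self a s'))
        (ih fun i hi => h i (Finset.mem_insert_of_mem hi))

lemma update_norm_le {d : ℕ} (a : Fin d → ℝ) (j : Fin d) (t : ℝ) :
    ‖Function.update a j t‖ ≤ ‖a‖ + |t| := by
  apply pi_norm_le_iff_of_nonneg (by positivity) |>.2
  intro i
  rw [Function.update_apply]
  split_ifs with h
  · rw [Real.norm_eq_abs]; linarith [norm_nonneg a]
  · have := norm_le_pi_norm a i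
    rw [Real.norm_eq_abs] at this ⊢
    linarith [abs_nonneg t]

lemma insertNth_eq_update {n : ℕ} (j : Fin (n+1)) (t : ℝ) (w : Fin n → ℝ) :
    (j.insertNth t w : Fin (n+1) → ℝ)
      = Function.update (j.insertNth 0 w : Fin (n+1) → ℝ) j t := by
  ext i
  by_cases h : i = j
  · subst h
    rw [Function.update_self, Fin.insertNth_apply_same]
  · obtain ⟨k, rfl⟩ := Fin.exists_succAbove_eq h
    rw [Function.update_of_ne (Fin.succAbove_ne j k)]
    rw [Fin.insertNth_apply_succAbove, Fin.insertNth_apply_succAbove]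

lemma steinD {d : ℕ} (j : Fin d) (φ φ' : (Fin d → ℝ) → ℝ)
    (hφ : Continuous φ) (hφ' : Continuous φ')
    (hd : ∀ z, HasDerivAt (fun t => φ (Function.update z j t)) (φ' z) (z j))
    (hpb : PolyBound φ) (hpb' : PolyBound φ') :
    ∫ z, φ z * z j ∂stdGaussian d = ∫ z, φ' z ∂stdGaussian d := by
  obtain ⟨C₁, m₁, hC₁, h₁⟩ := id hpb
  obtain ⟨C₂, m₂, hC₂, h₂⟩ := id hpb'
  set C := C₁ + C₂ with hCdef
  set m := max m₁ m₂ with hmdef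
  have hC : 0 ≤ C := by positivity
  have hb1 : ∀ z, |φ z| ≤ C * (1+‖z‖)^m := fun z =>
    (PolyBound.mono_exp hC₁ h₁ (le_max_left m₁ m₂) z).trans
      (mul_le_mul_of_nonneg_right (by linarith) (by positivity))
  have hb2 : ∀ z, |φ' z| ≤ C * (1+‖z‖)^m := fun z =>
    (PolyBound.mono_exp hC₂ h₂ (le_max_right m₁ m₂) z).trans
      (mul_le_mul_of_nonneg_right (by linarith) (by positivity))
  cases d with
  | zero => exact j.elim0
  | succ n =>
  have hmp := measurePreserving_piFinSuccAbove (fun _ : Fin (n+1) => gaussianReal 0 1) j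
  set e := MeasurableEquiv.piFinSuccAbove (fun _ : Fin (n+1) => ℝ) j with he
  have hesymm : ∀ p : ℝ × (Fin n → ℝ),
      e.symm p = Function.update (j.insertNth 0 p.2 : Fin (n+1) → ℝ) j p.1 := by
    intro p
    rw [he]
    rw [MeasurableEquiv.piFinSuccAbove_symm_apply]
    simp only [Fin.insertNthEquiv, Equiv.coe_fn_mk]
    exact insertNth_eq_update j p.1 p.2
  have hint1 : Integrable (fun z => φ z * z j) (stdGaussian (n+1)) :=
    integrable_polyBound (hφ.mul (continuous_apply j)) (pb_mul hpb (pb_coord j))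
  have hint2 : Integrable φ' (stdGaussian (n+1)) := integrable_polyBound hφ' hpb'
  have key : ∀ g : (Fin (n+1) → ℝ) → ℝ, Integrable g (stdGaussian (n+1)) →
      ∫ z, g z ∂stdGaussian (n+1)
        = ∫ w, ∫ t, g (Function.update (j.insertNth 0 w : Fin (n+1) → ℝ) j t)
            ∂(gaussianReal 0 1) ∂(stdGaussian n) := by
    intro g hg
    have hgint : Integrable (fun p => g (e.symm p)) ((gaussianReal 0 1).prod (stdGaussian n)) :=
      ((MeasurePreserving.symm e hmp).integrable_comp_emb e.symm.measurableEmbedding).2 hg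
    calc ∫ z, g z ∂stdGaussian (n+1)
        = ∫ p, g (e.symm p) ∂((gaussianReal 0 1).prod (stdGaussian n)) :=
          ((MeasurePreserving.symm e hmp).integral_comp' g).symm
      _ = ∫ w, ∫ t, g (e.symm (t, w)) ∂(gaussianReal 0 1) ∂(stdGaussian n) :=
          MeasureTheory.integral_prod_symm _ hgint
      _ = _ := by
          congr 1 with w
          congr 1 with t
          rw [hesymm (t, w)]
  rw [key _ hint1, key _ hint2]
  congr 1 with w
  set a : Fin (n+1) → ℝ := (j.insertNth 0 w : Fin (n+1) → ℝ) with ha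
  have hnorm : ∀ t : ℝ, (1 + ‖Function.update a j t‖)^m ≤ (1+‖a‖)^m * (1+|t|)^m := by
    intro t
    rw [← mul_pow]
    apply pow_le_pow_left₀ (by positivity)
    nlinarith [update_norm_le a j t, norm_nonneg a, abs_nonneg t]
  have hmain := stein1 (ψ := fun t => φ (Function.update a j t))
      (ψ' := fun t => φ' (Function.update a j t))
      (hφ.comp (continuous_const.update j continuous_id))
      (hφ'.comp (continuous_const.update j continuous_id))
      (fun t => by
        have h := hd (Function.update a j t)
        simp only [Function.update_idem, Function.update_self] at h
        exact h)
      (C * (1+‖a‖)^m) m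
      (fun t => by
        refine (hb1 _).trans ?_
        calc C * (1 + ‖Function.update a j t‖)^m ≤ C * ((1+‖a‖)^m * (1+|t|)^m) :=
              mul_le_mul_of_nonneg_left (hnorm t) hC
          _ = (C * (1+‖a‖)^m) * (1+|t|)^m := by ring)
      (fun t => by
        refine (hb2 _).trans ?_
        calc C * (1 + ‖Function.update a j t‖)^m ≤ C * ((1+‖a‖)^m * (1+|t|)^m) :=
              mul_le_mul_of_nonneg_left (hnorm t) hC
          _ = (C * (1+‖a‖)^m) * (1+|t|)^m := by ring)
  rw [← hmain]
  congr 1 with t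
  rw [Function.update_self]


lemma quad_zero {A S : ℝ} (hS : 0 ≤ S) (h : ∀ t : ℝ, 0 ≤ 2*t*A + t^2*S) : A = 0 := by
  by_contra hA
  have hpos : 0 < S + 1 := by linarith
  have key := h (-A/(S+1))
  have hA2 : 0 < A^2 := by positivity
  have hexpand : 2*(-A/(S+1))*A + (-A/(S+1))^2*S = -(A^2*(S+2))/(S+1)^2 := by
    field_simp
    ring
  rw [hexpand] at key
  have : (0:ℝ) < A^2*(S+2) := by nlinarith
  have h2 : -(A^2*(S+2))/(S+1)^2 < 0 := div_neg_of_neg_of_pos (by linarith) (by positivity)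
  linarith

lemma key_min {α : Type*} [MeasurableSpace α] {ν : Measure α} {ρ B : α → ℝ}
    (h2 : Integrable (fun z => ρ z ^ 2) ν)
    (hB : Integrable (fun z => ρ z * B z) ν)
    (hB2 : Integrable (fun z => (B z) ^ 2) ν)
    (h : ∀ t : ℝ, (∫ z, ρ z ^ 2 ∂ν) ≤ ∫ z, (ρ z + t * B z) ^ 2 ∂ν) :
    ∫ z, ρ z * B z ∂ν = 0 := by
  set A := ∫ z, ρ z * B z ∂ν with hA
  set S := ∫ z, (B z)^2 ∂ν with hS
  have hexp : ∀ t : ℝ, (∫ z, (ρ z + t * B z)^2 ∂ν)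
      = (∫ z, ρ z ^2 ∂ν) + (2*t*A + t^2*S) := by
    intro t
    have heq : (fun z => (ρ z + t * B z)^2)
        = fun z => ρ z^2 + ((2*t) * (ρ z * B z) + t^2 * (B z)^2) := by
      funext z; ring
    have ha : Integrable (fun z => (2*t) * (ρ z * B z)) ν := hB.const_mul (2*t)
    have hb : Integrable (fun z => t^2 * (B z)^2) ν := hB2.const_mul (t^2)
    have hsum : Integrable (fun z => (2*t) * (ρ z * B z) + t^2 * (B z)^2) ν := ha.add hb
    rw [heq]
    rw [integral_add h2 hsum]
    rw [integral_add ha hb]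
    rw [MeasureTheory.integral_const_mul, MeasureTheory.integral_const_mul]
  have hq : ∀ t : ℝ, 0 ≤ 2*t*A + t^2*S := by
    intro t
    have := h t
    rw [hexp t] at this
    linarith
  exact quad_zero (integral_nonneg fun z => sq_nonneg _) hq

lemma norm_affine_le {d : ℕ} (μv σ z : Fin d → ℝ) :
    ‖μv + σ * z‖ ≤ ‖μv‖ + ‖σ‖ * ‖z‖ := by
  refine (norm_add_le _ _).trans (add_le_add (le_refl _) ?_)
  apply pi_norm_le_iff_of_nonneg (by positivity) |>.2
  intro i
  calc ‖(σ * z) i‖ = ‖σ i‖ * ‖z i‖ := by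
        simp [Pi.mul_apply, Real.norm_eq_abs, abs_mul]
    _ ≤ ‖σ‖ * ‖z‖ := mul_le_mul (norm_le_pi_norm σ i) (norm_le_pi_norm z i)
        (norm_nonneg _) (norm_nonneg σ)

lemma pb_comp_affine {d : ℕ} (μv σ : Fin d → ℝ) {F : (Fin d → ℝ) → ℝ} (c : ℝ) (n : ℕ)
    (hb : ∀ x, |F x| ≤ c * (1 + ‖x‖) ^ n) :
    PolyBound (fun z => F (μv + σ * z)) := by
  refine ⟨|c| * (1 + ‖μv‖ + ‖σ‖) ^ n, n, by positivity, fun z => ?_⟩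
  have hXn := norm_affine_le μv σ z
  calc |F (μv + σ * z)| ≤ c * (1 + ‖μv + σ * z‖) ^ n := hb _
    _ ≤ |c| * (1 + ‖μv + σ * z‖) ^ n :=
        mul_le_mul_of_nonneg_right (le_abs_self c) (by positivity)
    _ ≤ |c| * ((1 + ‖μv‖ + ‖σ‖) * (1 + ‖z‖)) ^ n := by
        refine mul_le_mul_of_nonneg_left ?_ (abs_nonneg c)
        refine pow_le_pow_left₀ (by positivity) ?_ n
        nlinarith [norm_nonneg μv, norm_nonneg σ, norm_nonneg z]
    _ = (|c| * (1 + ‖μv‖ + ‖σ‖) ^ n) * (1 + ‖z‖) ^ n := by rw [mul_pow]; ring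

lemma affine_update_eq {d : ℕ} (μv σ : Fin d → ℝ) (j : Fin d) (z : Fin d → ℝ) (t : ℝ) :
    μv + σ * Function.update z j t
      = (μv + σ * Function.update z j 0) + t • (Pi.single j (σ j) : Fin d → ℝ) := by
  funext i
  simp only [Pi.add_apply, Pi.mul_apply, Pi.smul_apply, smul_eq_mul]
  rcases eq_or_ne i j with rfl | h
  · rw [Function.update_self, Function.update_self, Pi.single_eq_same]
    ring
  · rw [Function.update_of_ne h, Function.update_of_ne h, Pi.single_eq_of_ne h]
    ring

lemma single_sigma_eq {d : ℕ} (σ : Fin d → ℝ) (j : Fin d) :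
    (Pi.single j (σ j) : Fin d → ℝ) = σ j • (Pi.single j 1 : Fin d → ℝ) := by
  have := Pi.single_smul (f := fun _ : Fin d => ℝ) j (σ j) (1 : ℝ)
  simpa using this

lemma hasDerivAt_comp_affine {d : ℕ} (μv σ : Fin d → ℝ) {F : (Fin d → ℝ) → ℝ}
    (hF : Differentiable ℝ F) (j : Fin d) (z : Fin d → ℝ) :
    HasDerivAt (fun t => F (μv + σ * Function.update z j t))
      (σ j * fderiv ℝ F (μv + σ * z) (Pi.single j 1)) (z j) := by
  set b : Fin d → ℝ := μv + σ * Function.update z j 0 with hb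
  set u : Fin d → ℝ := (Pi.single j (σ j) : Fin d → ℝ) with hu
  have hpt : b + (z j) • u = μv + σ * z := by
    rw [hb, hu, ← affine_update_eq, Function.update_eq_self]
  have hline : HasDerivAt (fun t : ℝ => b + t • u) u (z j) := by
    simpa using ((hasDerivAt_id (z j)).smul_const u).const_add b
  have hF' : HasFDerivAt F (fderiv ℝ F (μv + σ * z)) (b + (z j) • u) := by
    rw [hpt]; exact (hF (μv + σ * z)).hasFDerivAt
  have hcomp := hF'.comp_hasDerivAt (z j) hline
  have hfun : (fun t => F (μv + σ * Function.update z j t)) = F ∘ (fun t : ℝ => b + t • u) := by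
    funext t
    rw [Function.comp_apply, hb, hu, ← affine_update_eq]
  rw [hfun]
  have : fderiv ℝ F (μv + σ * z) u = σ j * fderiv ℝ F (μv + σ * z) (Pi.single j 1) := by
    rw [hu, single_sigma_eq, (fderiv ℝ F (μv + σ * z)).map_smul, smul_eq_mul]
  rw [← this]
  exact hcomp

lemma norm_pi_single_le {d : ℕ} (j : Fin d) : ‖(Pi.single j 1 : Fin d → ℝ)‖ ≤ 1 := by
  apply pi_norm_le_iff_of_nonneg zero_le_one |>.2
  intro i
  rcases eq_or_ne i j with rfl | h
  · rw [Pi.single_eq_same]; simp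
  · rw [Pi.single_eq_of_ne h]; simp

lemma abs_clm_single_le {d : ℕ} (L : (Fin d → ℝ) →L[ℝ] ℝ) (j : Fin d) :
    |L (Pi.single j 1)| ≤ ‖L‖ := by
  calc |L (Pi.single j 1)| = ‖L (Pi.single j 1)‖ := (Real.norm_eq_abs _).symm
    _ ≤ ‖L‖ * ‖(Pi.single j 1 : Fin d → ℝ)‖ := L.le_opNorm _
    _ ≤ ‖L‖ * 1 := mul_le_mul_of_nonneg_left (norm_pi_single_le j) (norm_nonneg L)
    _ = ‖L‖ := mul_one _

lemma fderiv_section_eq {d : ℕ} {f : (Fin d → ℝ) → ℝ} (hf : ContDiff ℝ 2 f) (j : Fin d)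
    (x : Fin d → ℝ) :
    fderiv ℝ (fun y => fderiv ℝ f y (Pi.single j 1)) x
      = (fderiv ℝ (fderiv ℝ f) x).flip (Pi.single j 1) := by
  have h1 : ContDiff ℝ 1 (fderiv ℝ f) := hf.fderiv_right (by norm_num)
  have hc : DifferentiableAt ℝ (fderiv ℝ f) x := (h1.differentiable one_ne_zero) x
  have hu : DifferentiableAt ℝ (fun _ : Fin d → ℝ => (Pi.single j 1 : Fin d → ℝ)) x :=
    differentiableAt_const _
  rw [fderiv_clm_apply hc hu]
  rw [fderiv_fun_const]
  simp

lemma contDiff_fderiv_section {d : ℕ} {f : (Fin d → ℝ) → ℝ} (hf : ContDiff ℝ 2 f) (j : Fin d) :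
    ContDiff ℝ 1 (fun y => fderiv ℝ f y (Pi.single j 1)) := by
  have h1 : ContDiff ℝ 1 (fderiv ℝ f) := hf.fderiv_right (by norm_num)
  exact (ContinuousLinearMap.apply ℝ ℝ ((Pi.single j 1 : Fin d → ℝ))).contDiff.comp h1

lemma abs_fderiv_section_le {d : ℕ} {f : (Fin d → ℝ) → ℝ} (hf : ContDiff ℝ 2 f) (j : Fin d)
    (x : Fin d → ℝ) :
    |fderiv ℝ (fun y => fderiv ℝ f y (Pi.single j 1)) x (Pi.single j 1)|
      ≤ ‖fderiv ℝ (fderiv ℝ f) x‖ := by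
  rw [fderiv_section_eq hf j x]
  set D := fderiv ℝ (fderiv ℝ f) x
  have : D.flip (Pi.single j 1) (Pi.single j 1) = D (Pi.single j 1) (Pi.single j 1) := rfl
  rw [this]
  calc |D (Pi.single j 1) (Pi.single j 1)| ≤ ‖D (Pi.single j 1)‖ :=
        abs_clm_single_le (D (Pi.single j 1)) j
    _ ≤ ‖D‖ * ‖(Pi.single j 1 : Fin d → ℝ)‖ := D.le_opNorm _
    _ ≤ ‖D‖ * 1 := mul_le_mul_of_nonneg_left (norm_pi_single_le j) (norm_nonneg D)
    _ = ‖D‖ := mul_one _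

set_option maxHeartbeats 2000000 in
lemma main_core {d : ℕ} (μv σ : Fin d → ℝ) (hσ : ∀ j, 0 < σ j)
    (f : (Fin d → ℝ) → ℝ) (hf : ContDiff ℝ 2 f)
    (c : ℝ) (n : ℕ)
    (hbound : ∀ x : Fin d → ℝ,
      |f x| ≤ c * (1 + ‖x‖) ^ n ∧ ‖fderiv ℝ f x‖ ≤ c * (1 + ‖x‖) ^ n ∧
        ‖fderiv ℝ (fderiv ℝ f) x‖ ≤ c * (1 + ‖x‖) ^ n)
    (β0 : ℝ) (β1 β2 : Fin d → ℝ)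
    (hmin : ∀ (b0 : ℝ) (b1 b2 : Fin d → ℝ),
      (∫ z, (β0 + β1 ⬝ᵥ (μv + σ * z) + (∑ j, β2 j * ((μv + σ * z) j) ^ 2)
          - f (μv + σ * z)) ^ 2 ∂stdGaussian d)
        ≤ ∫ z, (b0 + b1 ⬝ᵥ (μv + σ * z) + (∑ j, b2 j * ((μv + σ * z) j) ^ 2)
            - f (μv + σ * z)) ^ 2 ∂stdGaussian d)
    (j : Fin d) :
    β2 j = (∫ z, fderiv ℝ (fun y => fderiv ℝ f y (Pi.single j 1)) (μv + σ * z)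
        (Pi.single j 1) ∂stdGaussian d) / 2
    ∧ β1 j = (∫ z, fderiv ℝ f (μv + σ * z) (Pi.single j 1) ∂stdGaussian d)
        - μv j * ∫ z, fderiv ℝ (fun y => fderiv ℝ f y (Pi.single j 1)) (μv + σ * z)
            (Pi.single j 1) ∂stdGaussian d := by
  classical
  have hσj := hσ j
  have haff : Continuous (fun z : Fin d → ℝ => μv + σ * z) :=
    continuous_const.add (continuous_const.mul continuous_id)
  have hfc : Continuous f := hf.continuous
  have hfd : Differentiable ℝ f := hf.differentiable (by norm_num)
  have hfd1 : ContDiff ℝ 1 (fun y => fderiv ℝ f y (Pi.single j 1)) := contDiff_fderiv_section hf j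
  set γ := stdGaussian d with hγdef
  set F1 : (Fin d → ℝ) → ℝ := fun z => fderiv ℝ f (μv + σ * z) (Pi.single j 1) with hF1def
  set F2 : (Fin d → ℝ) → ℝ := fun z =>
    fderiv ℝ (fun y => fderiv ℝ f y (Pi.single j 1)) (μv + σ * z) (Pi.single j 1) with hF2def
  set r : (Fin d → ℝ) → ℝ := fun z => β0 + β1 ⬝ᵥ (μv + σ * z)
      + (∑ k, β2 k * ((μv + σ * z) k) ^ 2) - f (μv + σ * z) with hrdef
  set r' : (Fin d → ℝ) → ℝ := fun z => σ j * β1 j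
      + β2 j * (2 * (μv j + σ j * z j) * σ j) - σ j * F1 z with hr'def
  -- continuity facts
  have hXjc : Continuous (fun z : Fin d → ℝ => μv j + σ j * z j) :=
    continuous_const.add (continuous_const.mul (continuous_apply j))
  have hF1c : Continuous F1 := by
    have h1 : ContDiff ℝ 1 (fderiv ℝ f) := hf.fderiv_right (by norm_num)
    exact ((ContinuousLinearMap.apply ℝ ℝ ((Pi.single j 1 : Fin d → ℝ))).continuous.comp
      h1.continuous).comp haff
  have hF2c : Continuous F2 := by
    exact ((ContinuousLinearMap.apply ℝ ℝ ((Pi.single j 1 : Fin d → ℝ))).continuous.comp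
      (hfd1.continuous_fderiv one_ne_zero)).comp haff
  have hrc : Continuous r := by
    rw [hrdef]
    refine Continuous.sub (Continuous.add (Continuous.add continuous_const ?_) ?_) (hfc.comp haff)
    · have : (fun z : Fin d → ℝ => β1 ⬝ᵥ (μv + σ * z))
          = fun z => ∑ k, β1 k * (μv k + σ k * z k) := by
        funext z; simp [dotProduct]
      rw [this]
      exact continuous_finset_sum _ fun k _ =>
        continuous_const.mul (continuous_const.add (continuous_const.mul (continuous_apply k)))
    · exact continuous_finset_sum _ fun k _ => continuous_const.mul
        (((continuous_apply k).comp haff).pow 2)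
  have hr'c : Continuous r' := by
    rw [hr'def]
    exact (continuous_const.add (continuous_const.mul
      ((continuous_const.mul hXjc).mul continuous_const))).sub (continuous_const.mul hF1c)
  -- polynomial bounds
  have pbX : ∀ k : Fin d, PolyBound (fun z : Fin d → ℝ => μv k + σ k * z k) := fun k =>
    pb_add (pb_const _) (pb_mul (pb_const _) (pb_coord k))
  have pbf : PolyBound (fun z => f (μv + σ * z)) :=
    pb_comp_affine μv σ c n (fun x => (hbound x).1)
  have pbF1 : PolyBound F1 :=
    pb_comp_affine μv σ c n (fun x => (abs_clm_single_le _ j).trans (hbound x).2.1)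
  have pbF2 : PolyBound F2 :=
    pb_comp_affine μv σ c n (fun x => (abs_fderiv_section_le hf j x).trans (hbound x).2.2)
  have pbr : PolyBound r := by
    have e : r = fun z => (β0 + (∑ k, β1 k * (μv k + σ k * z k))
        + (∑ k, β2 k * (μv k + σ k * z k) ^ 2)) - f (μv + σ * z) := by
      funext z; rw [hrdef]; simp [dotProduct]
    rw [e]
    refine pb_sub (pb_add (pb_add (pb_const β0) ?_) ?_) pbf
    · exact pb_sum Finset.univ _ fun k _ => pb_mul (pb_const (β1 k)) (pbX k)
    · refine pb_sum Finset.univ _ fun k _ => ?_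
      have : (fun z : Fin d → ℝ => β2 k * (μv k + σ k * z k) ^ 2)
          = fun z => β2 k * ((μv k + σ k * z k) * (μv k + σ k * z k)) := by
        funext z; ring
      rw [this]
      exact pb_mul (pb_const (β2 k)) (pb_mul (pbX k) (pbX k))
  have pbr' : PolyBound r' := by
    rw [hr'def]
    exact pb_sub (pb_add (pb_const _) (pb_mul (pb_const (β2 j))
      (pb_mul (pb_mul (pb_const 2) (pbX j)) (pb_const (σ j)))))
      (pb_mul (pb_const (σ j)) pbF1)
  -- section derivative of r
  have hd_r : ∀ z : Fin d → ℝ, HasDerivAt (fun t => r (Function.update z j t)) (r' z) (z j) := by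
    intro z
    have e : (fun t => r (Function.update z j t)) = fun t => β0
        + (∑ k, β1 k * (μv k + σ k * Function.update z j t k))
        + (∑ k, β2 k * (μv k + σ k * Function.update z j t k) ^ 2)
        - f (μv + σ * Function.update z j t) := by
      funext t; rw [hrdef]; simp [dotProduct]
    rw [e]
    have h1 : HasDerivAt (fun t : ℝ => ∑ k, β1 k * (μv k + σ k * Function.update z j t k))
        (β1 j * σ j) (z j) := by
      have hsum := HasDerivAt.sum (u := Finset.univ)
        (A := fun k (t : ℝ) => β1 k * (μv k + σ k * Function.update z j t k))
        (A' := fun k => if k = j then β1 j * σ j else 0) (x := z j) ?_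
      · simpa [Finset.sum_ite_eq', Finset.sum_fn] using hsum
      · intro k _
        rcases eq_or_ne k j with rfl | hk
        · simp only [Function.update_self, if_pos rfl]
          simpa using (((hasDerivAt_id (z k)).const_mul (σ k)).const_add (μv k)).const_mul (β1 k)
        · simp only [Function.update_of_ne hk, if_neg hk]
          exact hasDerivAt_const _ _
    have h2 : HasDerivAt (fun t : ℝ => ∑ k, β2 k * (μv k + σ k * Function.update z j t k) ^ 2)
        (β2 j * (2 * (μv j + σ j * z j) * σ j)) (z j) := by
      have hsum := HasDerivAt.sum (u := Finset.univ)
        (A := fun k (t : ℝ) => β2 k * (μv k + σ k * Function.update z j t k) ^ 2)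
        (A' := fun k => if k = j then β2 j * (2 * (μv j + σ j * z j) * σ j) else 0) (x := z j) ?_
      · simpa [Finset.sum_ite_eq', Finset.sum_fn] using hsum
      · intro k _
        rcases eq_or_ne k j with rfl | hk
        · simp only [Function.update_self, if_pos rfl]
          have hb : HasDerivAt (fun t : ℝ => μv k + σ k * t) (σ k * 1) (z k) :=
            ((hasDerivAt_id (z k)).const_mul (σ k)).const_add (μv k)
          have := (hb.pow 2).const_mul (β2 k)
          refine this.congr_deriv ?_
          push_cast
          ring
        · simp only [Function.update_of_ne hk, if_neg hk]
          exact hasDerivAt_const _ _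
    have h3 : HasDerivAt (fun t : ℝ => f (μv + σ * Function.update z j t))
        (σ j * F1 z) (z j) := hasDerivAt_comp_affine μv σ hfd j z
    have := (((hasDerivAt_const (z j) β0).add h1).add h2).sub h3
    refine this.congr_deriv ?_
    rw [hr'def]
    ring
  -- Stein identities
  have S0 : ∫ z, z j ∂γ = 0 := by
    have h := steinD j (fun _ => (1:ℝ)) (fun _ => (0:ℝ)) continuous_const continuous_const
      (fun z => hasDerivAt_const _ _) (pb_const 1) (pb_const 0)
    simpa using h
  have S1 : ∫ z, (μv j + σ j * z j) * z j ∂γ = σ j := by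
    have h := steinD j (fun z => μv j + σ j * z j) (fun _ => σ j) hXjc continuous_const
      (fun z => by
        simp only [Function.update_self]
        simpa using ((hasDerivAt_id (z j)).const_mul (σ j)).const_add (μv j))
      (pbX j) (pb_const (σ j))
    rw [h]
    simp
  have S2 : ∫ z, r z * z j ∂γ = ∫ z, r' z ∂γ :=
    steinD j r r' hrc hr'c hd_r pbr pbr'
  have S3 : ∫ z, (z j * r z) * z j ∂γ = ∫ z, (r z + z j * r' z) ∂γ := by
    refine steinD j (fun z => z j * r z) (fun z => r z + z j * r' z)
      ((continuous_apply j).mul hrc) (hrc.add ((continuous_apply j).mul hr'c))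
      (fun z => ?_) (pb_mul (pb_coord j) pbr) (pb_add pbr (pb_mul (pb_coord j) pbr'))
    simp only [Function.update_self]
    have h := (hasDerivAt_id (z j)).mul (hd_r z)
    rw [Function.update_eq_self] at h
    simpa [Pi.mul_def] using h
  have S4 : ∫ z, F1 z * z j ∂γ = ∫ z, σ j * F2 z ∂γ := by
    refine steinD j F1 (fun z => σ j * F2 z) hF1c (continuous_const.mul hF2c)
      (fun z => ?_) pbF1 (pb_mul (pb_const (σ j)) pbF2)
    exact hasDerivAt_comp_affine μv σ (hfd1.differentiable one_ne_zero) j z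
  -- integrability
  have i1 : Integrable r γ := integrable_polyBound hrc pbr
  have i2 : Integrable (fun z => r z ^ 2) γ := by
    have e : (fun z => r z ^ 2) = fun z => r z * r z := by funext z; ring
    rw [e]; exact integrable_polyBound (hrc.mul hrc) (pb_mul pbr pbr)
  have i3 : Integrable (fun z => r z * z j) γ :=
    integrable_polyBound (hrc.mul (continuous_apply j)) (pb_mul pbr (pb_coord j))
  have i4 : Integrable (fun z => r z * (μv j + σ j * z j)) γ :=
    integrable_polyBound (hrc.mul hXjc) (pb_mul pbr (pbX j))
  have i5 : Integrable (fun z => r z * (μv j + σ j * z j) ^ 2) γ := by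
    have e : (fun z => r z * (μv j + σ j * z j) ^ 2)
        = fun z => (r z * (μv j + σ j * z j)) * (μv j + σ j * z j) := by funext z; ring
    rw [e]
    exact integrable_polyBound ((hrc.mul hXjc).mul hXjc) (pb_mul (pb_mul pbr (pbX j)) (pbX j))
  have i6 : Integrable (fun z => (μv j + σ j * z j) ^ 2) γ := by
    have e : (fun z : Fin d → ℝ => (μv j + σ j * z j) ^ 2)
        = fun z => (μv j + σ j * z j) * (μv j + σ j * z j) := by funext z; ring
    rw [e]; exact integrable_polyBound (hXjc.mul hXjc) (pb_mul (pbX j) (pbX j))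
  have i7 : Integrable (fun z => ((μv j + σ j * z j) ^ 2) ^ 2) γ := by
    have e : (fun z : Fin d → ℝ => ((μv j + σ j * z j) ^ 2) ^ 2)
        = fun z => ((μv j + σ j * z j) * (μv j + σ j * z j))
          * ((μv j + σ j * z j) * (μv j + σ j * z j)) := by funext z; ring
    rw [e]
    exact integrable_polyBound ((hXjc.mul hXjc).mul (hXjc.mul hXjc))
      (pb_mul (pb_mul (pbX j) (pbX j)) (pb_mul (pbX j) (pbX j)))
  have i8 : Integrable (fun z => r z * z j ^ 2) γ := by
    have e : (fun z => r z * z j ^ 2) = fun z => (r z * z j) * z j := by funext z; ring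
    rw [e]
    exact integrable_polyBound ((hrc.mul (continuous_apply j)).mul (continuous_apply j))
      (pb_mul (pb_mul pbr (pb_coord j)) (pb_coord j))
  have iF1 : Integrable F1 γ := integrable_polyBound hF1c pbF1
  have iF1z : Integrable (fun z => F1 z * z j) γ :=
    integrable_polyBound (hF1c.mul (continuous_apply j)) (pb_mul pbF1 (pb_coord j))
  have iF2 : Integrable F2 γ := integrable_polyBound hF2c pbF2
  have izj : Integrable (fun z : Fin d → ℝ => z j) γ :=
    integrable_polyBound (continuous_apply j) (pb_coord j)
  have iXz : Integrable (fun z => (μv j + σ j * z j) * z j) γ :=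
    integrable_polyBound (hXjc.mul (continuous_apply j)) (pb_mul (pbX j) (pb_coord j))
  have ir' : Integrable r' γ := integrable_polyBound hr'c pbr'
  have izr' : Integrable (fun z => z j * r' z) γ :=
    integrable_polyBound ((continuous_apply j).mul hr'c) (pb_mul (pb_coord j) pbr')
  -- normal equations
  have hminconv : ∀ (b0 : ℝ) (b1 b2 : Fin d → ℝ),
      (∫ z, r z ^ 2 ∂γ) ≤ ∫ z, (b0 + b1 ⬝ᵥ (μv + σ * z)
        + (∑ k, b2 k * ((μv + σ * z) k) ^ 2) - f (μv + σ * z)) ^ 2 ∂γ := by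
    intro b0 b1 b2
    refine le_trans (le_of_eq ?_) (hmin b0 b1 b2)
    congr 1
  have N0 : ∫ z, r z * 1 ∂γ = 0 := by
    refine key_min i2 (by simpa using i1) (by simpa using (integrable_const (1:ℝ) : Integrable (fun _ : Fin d → ℝ => (1:ℝ)) γ)) ?_
    intro t
    refine le_trans (hminconv (β0 + t) β1 β2) (le_of_eq ?_)
    congr 1 with z
    rw [hrdef]
    ring
  have N0' : ∫ z, r z ∂γ = 0 := by
    rw [← N0]; congr 1 with z; ring
  have N1 : ∫ z, r z * (μv j + σ j * z j) ∂γ = 0 := by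
    refine key_min i2 i4 i6 ?_
    intro t
    refine le_trans (hminconv β0 (β1 + Pi.single j t) β2) (le_of_eq ?_)
    congr 1 with z
    rw [hrdef]
    rw [add_dotProduct, single_dotProduct]
    simp only [Pi.add_apply, Pi.mul_apply]
    ring
  have N2 : ∫ z, r z * (μv j + σ j * z j) ^ 2 ∂γ = 0 := by
    refine key_min i2 i5 i7 ?_
    intro t
    refine le_trans (hminconv β0 β1 (β2 + Pi.single j t)) (le_of_eq ?_)
    congr 1 with z
    rw [hrdef]
    have hsum : (∑ k, ((β2 + Pi.single j t : Fin d → ℝ)) k * ((μv + σ * z) k) ^ 2)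
        = (∑ k, β2 k * ((μv + σ * z) k) ^ 2) + t * ((μv + σ * z) j) ^ 2 := by
      have e : ∀ k : Fin d, ((β2 + Pi.single j t : Fin d → ℝ)) k * ((μv + σ * z) k) ^ 2
          = β2 k * ((μv + σ * z) k) ^ 2
            + (if k = j then t * ((μv + σ * z) k) ^ 2 else 0) := by
        intro k
        rcases eq_or_ne k j with rfl | hk
        · simp only [Pi.add_apply, Pi.single_eq_same, eq_self_iff_true, if_true]
          ring
        · simp only [Pi.add_apply, Pi.single_eq_of_ne hk, if_neg hk, add_zero]
      rw [Finset.sum_congr rfl fun k _ => e k, Finset.sum_add_distrib, Finset.sum_ite_eq']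
      simp
    rw [hsum]
    simp only [Pi.add_apply, Pi.mul_apply]
    ring
  -- combine to get moments of r against z j and z j ^ 2
  have Ezr : ∫ z, r z * z j ∂γ = 0 := by
    have e : (fun z => r z * (μv j + σ j * z j))
        = fun z => μv j * r z + σ j * (r z * z j) := by funext z; ring
    rw [e] at N1
    rw [integral_add (i1.const_mul (μv j)) (i3.const_mul (σ j)),
      MeasureTheory.integral_const_mul, MeasureTheory.integral_const_mul, N0'] at N1
    have : σ j * ∫ z, r z * z j ∂γ = 0 := by linarith
    rcases mul_eq_zero.1 this with h | h
    · exact absurd h (ne_of_gt hσj)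
    · exact h
  have Ezr2 : ∫ z, r z * z j ^ 2 ∂γ = 0 := by
    have e : (fun z => r z * (μv j + σ j * z j) ^ 2)
        = fun z => (μv j ^ 2 * r z + (2 * μv j * σ j) * (r z * z j))
          + σ j ^ 2 * (r z * z j ^ 2) := by funext z; ring
    have ia : Integrable (fun z => μv j ^ 2 * r z + (2 * μv j * σ j) * (r z * z j)) γ :=
      (i1.const_mul _).add (i3.const_mul _)
    rw [e] at N2
    rw [integral_add ia (i8.const_mul _),
      integral_add (i1.const_mul _) (i3.const_mul _),
      MeasureTheory.integral_const_mul, MeasureTheory.integral_const_mul,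
      MeasureTheory.integral_const_mul, N0', Ezr] at N2
    have : σ j ^ 2 * ∫ z, r z * z j ^ 2 ∂γ = 0 := by linarith
    rcases mul_eq_zero.1 this with h | h
    · exact absurd h (by positivity)
    · exact h
  -- first conclusion pieces
  set gvj := ∫ z, F1 z ∂γ with hgvj
  set hvj := ∫ z, F2 z ∂γ with hhvj
  have EF1z : ∫ z, F1 z * z j ∂γ = σ j * hvj := by
    rw [S4, MeasureTheory.integral_const_mul]
  have Er' : ∫ z, r' z ∂γ = 0 := by rw [← S2, Ezr]
  have EQ1 : σ j * β1 j + 2 * σ j * β2 j * μv j - σ j * gvj = 0 := by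
    have e : r' = fun z => ((σ j * β1 j + β2 j * 2 * σ j * μv j)
        + (β2 j * 2 * σ j * σ j) * z j) - σ j * F1 z := by
      funext z; rw [hr'def]; ring
    have ia : Integrable (fun z => (σ j * β1 j + β2 j * 2 * σ j * μv j)
        + (β2 j * 2 * σ j * σ j) * z j) γ := (integrable_const _).add (izj.const_mul _)
    rw [e] at Er'
    rw [integral_sub ia (iF1.const_mul _),
      integral_add (integrable_const _) (izj.const_mul _)] at Er'
    simp only [MeasureTheory.integral_const_mul] at Er'
    rw [S0, integral_const] at Er'
    simp only [measure_univ, probReal_univ, ENNReal.toReal_one, one_smul, mul_zero, add_zero] at Er'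
    rw [← hgvj] at Er'
    linarith
  have Ezr' : ∫ z, z j * r' z ∂γ = 0 := by
    have e1 : ∫ z, (z j * r z) * z j ∂γ = 0 := by
      rw [← Ezr2]; congr 1 with z; ring
    have := S3
    rw [e1, integral_add i1 izr', N0'] at this
    linarith
  have EQ2 : 2 * σ j * β2 j * σ j - σ j * (σ j * hvj) = 0 := by
    have e : (fun z => z j * r' z) = fun z => ((σ j * β1 j) * z j
        + (2 * σ j * β2 j) * ((μv j + σ j * z j) * z j)) - σ j * (F1 z * z j) := by
      funext z; rw [hr'def]; ring
    have ia : Integrable (fun z => (σ j * β1 j) * z j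
        + (2 * σ j * β2 j) * ((μv j + σ j * z j) * z j)) γ :=
      (izj.const_mul _).add (iXz.const_mul _)
    rw [e] at Ezr'
    rw [integral_sub ia (iF1z.const_mul _),
      integral_add (izj.const_mul _) (iXz.const_mul _),
      MeasureTheory.integral_const_mul, MeasureTheory.integral_const_mul,
      MeasureTheory.integral_const_mul, S0, S1, EF1z] at Ezr'
    linarith
  have hβ2 : β2 j = hvj / 2 := by
    have hσ2 : σ j ^ 2 ≠ 0 := by positivity
    have : σ j ^ 2 * (2 * β2 j - hvj) = 0 := by nlinarith [EQ2]
    rcases mul_eq_zero.1 this with h | h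
    · exact absurd h hσ2
    · linarith
  have hβ1 : β1 j = gvj - μv j * hvj := by
    have : σ j * (β1 j + 2 * β2 j * μv j - gvj) = 0 := by nlinarith [EQ1]
    rcases mul_eq_zero.1 this with h | h
    · exact absurd h (ne_of_gt hσj)
    · rw [hβ2] at h; linarith
  exact ⟨hβ2, hβ1⟩

/-- With `X = μ + σ ⊙ Z`, `σ_j > 0`, `f` twice continuously
differentiable with polynomially bounded `|f|`, `‖∇f‖`, `‖∇²f‖`, and
`h_j = E[(∂²_{jj} f)(X)] < 0` for all `j`, the unique minimiser `β = (β⁰, β¹, β²)` of the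
mean-field least-squares objective satisfies `β²_j = ½ h_j` and `β¹_j = g_j − μ_j h_j`
where `g = E[∇f(X)]`; consequently the mean-field Gaussian with natural parameters
`(β¹, β²)` has mean `μ'_j = μ_j − g_j/h_j` and variance `σ'²_j = −1/h_j`. -/
theorem stmt15
    {d : ℕ} (μv σ : Fin d → ℝ) (hσ : ∀ j, 0 < σ j)
    (f : (Fin d → ℝ) → ℝ) (hf : ContDiff ℝ 2 f)
    (c : ℝ) (n : ℕ)
    (hbound : ∀ x : Fin d → ℝ,
      |f x| ≤ c * (1 + ‖x‖) ^ n ∧ ‖fderiv ℝ f x‖ ≤ c * (1 + ‖x‖) ^ n ∧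
        ‖fderiv ℝ (fderiv ℝ f) x‖ ≤ c * (1 + ‖x‖) ^ n)
    -- `g = E[∇f(X)]` and `h_j = E[(∂²_{jj} f)(X)]`
    (gv : Fin d → ℝ)
    (hgv : gv = fun j => ∫ z, fderiv ℝ f (μv + σ * z) (Pi.single j 1) ∂stdGaussian d)
    (hv : Fin d → ℝ)
    (hhv : hv = fun j => ∫ z, fderiv ℝ (fun y => fderiv ℝ f y (Pi.single j 1)) (μv + σ * z)
      (Pi.single j 1) ∂stdGaussian d)
    (hneg : ∀ j, hv j < 0)
    -- `β` is the unique minimiser of the mean-field least-squares objective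
    (β0 : ℝ) (β1 β2 : Fin d → ℝ)
    (hmin : ∀ (b0 : ℝ) (b1 b2 : Fin d → ℝ),
      (∫ z, (β0 + β1 ⬝ᵥ (μv + σ * z) + (∑ j, β2 j * ((μv + σ * z) j) ^ 2)
          - f (μv + σ * z)) ^ 2 ∂stdGaussian d)
        ≤ ∫ z, (b0 + b1 ⬝ᵥ (μv + σ * z) + (∑ j, b2 j * ((μv + σ * z) j) ^ 2)
            - f (μv + σ * z)) ^ 2 ∂stdGaussian d)
    (huniq : ∀ (b0 : ℝ) (b1 b2 : Fin d → ℝ),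
      (∀ (c0 : ℝ) (c1 c2 : Fin d → ℝ),
        (∫ z, (b0 + b1 ⬝ᵥ (μv + σ * z) + (∑ j, b2 j * ((μv + σ * z) j) ^ 2)
            - f (μv + σ * z)) ^ 2 ∂stdGaussian d)
          ≤ ∫ z, (c0 + c1 ⬝ᵥ (μv + σ * z) + (∑ j, c2 j * ((μv + σ * z) j) ^ 2)
              - f (μv + σ * z)) ^ 2 ∂stdGaussian d) →
      b0 = β0 ∧ b1 = β1 ∧ b2 = β2) :
    (∀ j, β2 j = hv j / 2)
    ∧ (∀ j, β1 j = gv j - μv j * hv j)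
    ∧ (∀ j, -(β1 j) / (2 * β2 j) = μv j - gv j / hv j)
    ∧ (∀ j, -(1 : ℝ) / (2 * β2 j) = -(1 : ℝ) / hv j) := by
  have hcore := fun j => main_core μv σ hσ f hf c n hbound β0 β1 β2 hmin j
  have hg : ∀ j, gv j = ∫ z, fderiv ℝ f (μv + σ * z) (Pi.single j 1) ∂stdGaussian d := by
    intro j; rw [hgv]
  have hh : ∀ j, hv j = ∫ z, fderiv ℝ (fun y => fderiv ℝ f y (Pi.single j 1)) (μv + σ * z)
      (Pi.single j 1) ∂stdGaussian d := by
    intro j; rw [hhv]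
  have h2 : ∀ j, β2 j = hv j / 2 := fun j => by rw [hh j]; exact (hcore j).1
  have h1 : ∀ j, β1 j = gv j - μv j * hv j := fun j => by
    rw [hg j, hh j]; exact (hcore j).2
  refine ⟨h2, h1, fun j => ?_, fun j => ?_⟩
  · have hne : hv j ≠ 0 := ne_of_lt (hneg j)
    rw [h1 j, h2 j]
    field_simp
    ring
  · rw [h2 j]
    have e : 2 * (hv j / 2) = hv j := by ring
    rw [e]
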